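/- arXiv:2103.03314 — 10 statements merged into one kernel-verified Lean document; each statement's English description precedes it below -/
import Mathlib

section
/- Let I be a finite set partitioned into nonempty groups G1,...,Gm, and let W be a finite family of subsets of I with integer values v_W (positive or negative). For a transversal J define Q(J) = Σ_{W ⊆ J} v_W. Split W into W_P = {W : v_W > 0} and W_N = {W : v_W < 0}. Consider the weighted formula with hard clauses enforcing exactly one element per group; for each W ∈ W_P a soft clause (∨_{f_i ∈ W} ¬x_i) of weight v_W; and for each W ∈ W_N a fresh variable y_W with hard clauses enforcing y_W ↔ (∧_{f_i ∈ W} x_i) and a soft clause (y_W) of weight |v_W|. Then for any assignment s satisfying all hard clauses, with transversal J_s, we have Q(J_s) = (Σ_{W ∈ W_P} v_W) − g(s), where g(s) is the total weight of soft clauses satisfied by s. -/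
open Finset

/-- `s` satisfies the hard group clauses: exactly one variable true per group. -/
def SatHard {F γ : Type*} (g : F → γ) (s : F → Bool) : Prop :=
  (∀ j : γ, ∃ f, g f = j ∧ s f = true) ∧
  (∀ u v : F, u ≠ v → g u = g v → ¬(s u = true ∧ s v = true))

/-- The repair (transversal) corresponding to an assignment `s`. -/
def repOf {F : Type*} [Fintype F] [DecidableEq F] (s : F → Bool) : Finset F :=
  Finset.univ.filter (fun f => s f = true)

/-- `Q(J) = Σ_{W ⊆ J} v_W` with integer values. -/
def QvalZ {F ι : Type*} [Fintype ι] [DecidableEq F]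
    (w : ι → Finset F) (v : ι → ℤ) (J : Finset F) : ℤ :=
  ∑ W : ι, if w W ⊆ J then v W else 0

/-- Total weight `g(s)` of the satisfied soft clauses: for `W ∈ W_P` the clause
`(∨_{f ∈ W} ¬x_f)` of weight `v_W`, and for `W ∈ W_N` the clause `(y_W)` of
weight `|v_W|` (where `t` assigns the `y`-variables). -/
def gWeight {F ι : Type*} [Fintype ι]
    (w : ι → Finset F) (v : ι → ℤ) (s : F → Bool) (t : ι → Bool) : ℤ :=
  (∑ W ∈ Finset.univ.filter (fun W => 0 < v W),
      if ∃ f ∈ w W, s f = false then v W else 0) +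
  (∑ W ∈ Finset.univ.filter (fun W => v W < 0),
      if t W = true then |v W| else 0)

/-- For SUM with positive and negative witness values: for any assignment `(s, t)`
satisfying the hard clauses — `s` picks exactly one fact per group and each fresh
variable `y_W` (for `W ∈ W_N`) equals the conjunction `∧_{f ∈ W} x_f` — we have
`Q(J_s) = (Σ_{W ∈ W_P} v_W) − g(s)`. -/
theorem stmt5 {F γ ι : Type*} [Fintype F] [DecidableEq F] [Fintype ι]
    (g : F → γ) (hg : ∀ j : γ, ∃ f, g f = j)
    (w : ι → Finset F) (v : ι → ℤ) (hv : ∀ W, v W ≠ 0) :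
    ∀ (s : F → Bool) (t : ι → Bool), SatHard g s →
      (∀ W : ι, v W < 0 → (t W = true ↔ ∀ f ∈ w W, s f = true)) →
      QvalZ w v (repOf s) =
        (∑ W ∈ Finset.univ.filter (fun W => 0 < v W), v W) - gWeight w v s t := by

  intro s t hs ht
  have hsub : ∀ W : ι, (w W ⊆ repOf s) ↔ ∀ f ∈ w W, s f = true := by
    intro W
    constructor
    · intro h f hf
      have := h hf
      simpa [repOf] using this
    · intro h f hf
      simp [repOf, h f hf]
  have hfilt : Finset.univ.filter (fun W : ι => ¬ 0 < v W)
      = Finset.univ.filter (fun W : ι => v W < 0) := by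
    apply Finset.filter_congr
    intro W _
    simp only [not_lt, eq_iff_iff]
    constructor
    · intro h; exact lt_of_le_of_ne h (hv W)
    · intro h; exact le_of_lt h
  unfold QvalZ gWeight
  rw [← Finset.sum_filter_add_sum_filter_not Finset.univ (fun W : ι => 0 < v W)
    (fun W => if w W ⊆ repOf s then v W else (0:ℤ)), hfilt]
  have hpos : ∑ W ∈ Finset.univ.filter (fun W : ι => 0 < v W), (if w W ⊆ repOf s then v W else 0)
      = (∑ W ∈ Finset.univ.filter (fun W : ι => 0 < v W), v W)
      - ∑ W ∈ Finset.univ.filter (fun W : ι => 0 < v W),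
          (if ∃ f ∈ w W, s f = false then v W else 0) := by
    rw [eq_sub_iff_add_eq, ← Finset.sum_add_distrib]
    apply Finset.sum_congr rfl
    intro W _
    by_cases h : w W ⊆ repOf s
    · have : ¬ ∃ f ∈ w W, s f = false := by
        rintro ⟨f, hf, hfs⟩
        have := (hsub W).1 h f hf
        simp [this] at hfs
      simp [h, this]
    · have : ∃ f ∈ w W, s f = false := by
        rw [hsub W] at h
        push_neg at h
        obtain ⟨f, hf, hfs⟩ := h
        exact ⟨f, hf, by simpa using hfs⟩
      simp [h, this]
  have hneg : ∑ W ∈ Finset.univ.filter (fun W : ι => v W < 0), (if w W ⊆ repOf s then v W else 0)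
      = - ∑ W ∈ Finset.univ.filter (fun W : ι => v W < 0),
          (if t W = true then |v W| else 0) := by
    rw [← Finset.sum_neg_distrib]
    apply Finset.sum_congr rfl
    intro W hW
    simp only [Finset.mem_filter] at hW
    have habs : |v W| = - v W := abs_of_neg hW.2
    by_cases h : w W ⊆ repOf s
    · have : t W = true := (ht W hW.2).2 ((hsub W).1 h)
      simp [h, this, habs]
    · have : t W ≠ true := by
        intro htW
        exact h ((hsub W).2 ((ht W hW.2).1 htW))
      simp [h, this]
  rw [hpos, hneg]
  ring
end

section
/- Let G = (V, E) be an undirected graph, and let I be the database instance constructed from G by the Max-Cut reduction (with m = −|E| − 1). Then for every repair J of I, there exists a repair J' of I such that J' produces a red-blue coloring of G and Q(J') ≥ Q(J), where Q is the SUM aggregation query over the underlying conjunctive query q(A) = ∃x∃y (R1(x,'red') ∧ R2(y,'blue') ∧ R3(x,'red',y,'blue',A)). -/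
open Finset

/-- The answer of the SUM aggregation query `Q` on the repair of the Max-Cut-reduction
instance determined by the choices `c1 c2 : V → Bool`, where `c1 v = true` means
`R1(v,'red') ∈ J` (else `R1(v,'blue') ∈ J`) and `c2 v = true` means `R2(v,'red') ∈ J`
(else `R2(v,'blue') ∈ J`).  The witnesses of
`q(A) = ∃x∃y (R1(x,'red') ∧ R2(y,'blue') ∧ R3(x,'red',y,'blue',A))` contribute:
`1` for each ordered pair `(x, y)` of adjacent vertices with `c1 x` red and `c2 y` blue,
and `m = −|E| − 1` for each vertex `v` with `c1 v` red and `c2 v` blue. -/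
def Qagg {V : Type*} [Fintype V] [DecidableEq V]
    (G : SimpleGraph V) [DecidableRel G.Adj] (c1 c2 : V → Bool) : ℤ :=
  (∑ p : V × V,
      if G.Adj p.1 p.2 ∧ c1 p.1 = true ∧ c2 p.2 = false then (1 : ℤ) else 0) +
  (∑ v : V,
      if c1 v = true ∧ c2 v = false then (-(G.edgeFinset.card : ℤ) - 1) else 0)

/-- For every repair `J` of the Max-Cut-reduction instance, there is a repair `J'`
producing a red-blue coloring of `G` (i.e. for each vertex `v`, the facts `R1(v,'red')`
and `R2(v,'red')` are both present or both absent) with `Q(J') ≥ Q(J)`. -/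
theorem stmt6 {V : Type*} [Fintype V] [DecidableEq V]
    (G : SimpleGraph V) [DecidableRel G.Adj] :
    ∀ c1 c2 : V → Bool, ∃ c1' c2' : V → Bool,
      (∀ v : V, c1' v = c2' v) ∧ Qagg G c1 c2 ≤ Qagg G c1' c2' := by
  classical
  intro c1 c2
  refine ⟨c1, c1, fun v => rfl, ?_⟩
  set E : ℤ := (G.edgeFinset.card : ℤ) with hE
  have hdegE : ∀ y : V, (G.degree y : ℤ) ≤ E := by
    intro y
    have h1 : G.incidenceFinset y ⊆ G.edgeFinset := by
      intro e he
      rw [SimpleGraph.mem_incidenceFinset] at he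
      exact SimpleGraph.mem_edgeFinset.mpr he.1
    have := Finset.card_le_card h1
    rw [SimpleGraph.card_incidenceFinset_eq_degree] at this
    rw [hE]
    exact_mod_cast this
  have hdeg : ∀ y : V, (∑ x : V, if G.Adj x y then (1:ℤ) else 0) = (G.degree y : ℤ) := by
    intro y
    rw [Finset.sum_boole]
    have : (filter (fun x => G.Adj x y) univ) = G.neighborFinset y := by
      ext x
      simp [SimpleGraph.adj_comm]
    rw [this]
    rfl
  set S : Finset V := univ.filter (fun v => c1 v = true ∧ c2 v = false) with hS
  -- second sum of original
  have h2 : (∑ v : V, if c1 v = true ∧ c2 v = false then (-E - 1) else 0)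
      = S.card * (-E - 1) := by
    rw [Finset.sum_ite, Finset.sum_const, Finset.sum_const_zero, add_zero, nsmul_eq_mul]
  -- pointwise bound
  have hpt : ∀ p : V × V,
      (if G.Adj p.1 p.2 ∧ c1 p.1 = true ∧ c2 p.2 = false then (1:ℤ) else 0)
      ≤ (if G.Adj p.1 p.2 ∧ c1 p.1 = true ∧ c1 p.2 = false then (1:ℤ) else 0)
        + (if G.Adj p.1 p.2 ∧ c1 p.2 = true ∧ c2 p.2 = false then (1:ℤ) else 0) := by
    intro p
    rcases Bool.eq_false_or_eq_true (c1 p.2) with h | h <;> split_ifs <;> simp_all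
  have hsplit : (∑ p : V × V, if G.Adj p.1 p.2 ∧ c1 p.1 = true ∧ c2 p.2 = false then (1:ℤ) else 0)
      ≤ (∑ p : V × V, if G.Adj p.1 p.2 ∧ c1 p.1 = true ∧ c1 p.2 = false then (1:ℤ) else 0)
        + (∑ p : V × V, if G.Adj p.1 p.2 ∧ c1 p.2 = true ∧ c2 p.2 = false then (1:ℤ) else 0) := by
    rw [← Finset.sum_add_distrib]
    exact Finset.sum_le_sum (fun p _ => hpt p)
  have hbound : (∑ p : V × V, if G.Adj p.1 p.2 ∧ c1 p.2 = true ∧ c2 p.2 = false then (1:ℤ) else 0)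
      ≤ S.card * E := by
    rw [Fintype.sum_prod_type, Finset.sum_comm]
    have : ∀ y : V, (∑ x : V, if G.Adj x y ∧ c1 y = true ∧ c2 y = false then (1:ℤ) else 0)
        = if c1 y = true ∧ c2 y = false then (G.degree y : ℤ) else 0 := by
      intro y
      by_cases h : c1 y = true ∧ c2 y = false
      · simp only [h, and_true, if_true]
        exact hdeg y
      · simp [h]
    calc (∑ y : V, ∑ x : V, if G.Adj x y ∧ c1 y = true ∧ c2 y = false then (1:ℤ) else 0)
        = ∑ y : V, if c1 y = true ∧ c2 y = false then (G.degree y : ℤ) else 0 := by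
          exact Finset.sum_congr rfl (fun y _ => this y)
      _ ≤ ∑ y : V, if c1 y = true ∧ c2 y = false then E else 0 := by
          apply Finset.sum_le_sum
          intro y _
          split_ifs
          · exact hdegE y
          · exact le_refl 0
      _ = S.card * E := by
          rw [Finset.sum_ite, Finset.sum_const, Finset.sum_const_zero, add_zero, nsmul_eq_mul]
  have hzero : (∑ v : V, if c1 v = true ∧ c1 v = false then (-E - 1) else 0) = 0 := by
    apply Finset.sum_eq_zero
    intro v _
    simp
  unfold Qagg
  rw [← hE, h2, hzero, add_zero]
  have : (S.card : ℤ) * (-E - 1) = - (S.card * E) - S.card := by ring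
  nlinarith [Nat.cast_nonneg (α := ℤ) S.card]
end

section
/- Let G = (V, E) be an undirected graph and I the instance from the Max-Cut reduction (with m = −|E|−1). For every non-negative integer k: there exists a cut (S, S̄) of G with |E(S, S̄)| ≥ k if and only if there exists a repair J of I that produces a red-blue coloring of G and satisfies Q(J) ≥ k, where Q(J) sums the values A over all witnesses R1(x,'red'), R2(y,'blue'), R3(x,'red',y,'blue',A) contained in J. -/
open Finset

/-- The size `|E(S, S̄)|` of the cut `(S, V \ S)`: the number of edges with one endpoint
in `S` and the other outside `S`. -/
def cutSize {V : Type*} [Fintype V] [DecidableEq V]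
    (G : SimpleGraph V) [DecidableRel G.Adj] (S : Finset V) : ℕ :=
  (Finset.univ.filter
    (fun p : V × V => G.Adj p.1 p.2 ∧ p.1 ∈ S ∧ p.2 ∉ S)).card

/-- For every non-negative integer `k`: `G` has a cut of size at least `k` iff the
Max-Cut-reduction instance has a repair producing a red-blue coloring of `G`
(for each `v`, `R1(v,'red') ∈ J ↔ R2(v,'red') ∈ J`) with `Q(J) ≥ k`. -/
theorem stmt7 {V : Type*} [Fintype V] [DecidableEq V]
    (G : SimpleGraph V) [DecidableRel G.Adj] :
    ∀ k : ℕ,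
      (∃ S : Finset V, k ≤ cutSize G S) ↔
      (∃ c1 c2 : V → Bool, (∀ v : V, c1 v = c2 v) ∧ (k : ℤ) ≤ Qagg G c1 c2) := by
  have key : ∀ c : V → Bool,
      Qagg G c c = (cutSize G (Finset.univ.filter (fun v => c v = true)) : ℤ) := by
    intro c
    unfold Qagg cutSize
    have h2 : (∑ v : V,
        if c v = true ∧ c v = false then (-(G.edgeFinset.card : ℤ) - 1) else 0) = 0 := by
      apply Finset.sum_eq_zero
      intro v _
      simp
    rw [h2, add_zero, Finset.card_filter]
    push_cast
    apply Finset.sum_congr rfl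
    intro p _
    simp
  intro k
  constructor
  · rintro ⟨S, hS⟩
    refine ⟨fun v => v ∈ S, fun v => v ∈ S, fun v => rfl, ?_⟩
    rw [key]
    have : Finset.univ.filter (fun v => (decide (v ∈ S)) = true) = S := by
      ext v; simp
    rw [this]
    exact_mod_cast hS
  · rintro ⟨c1, c2, hc, hk⟩
    have : c1 = c2 := funext hc
    subst this
    rw [key] at hk
    exact ⟨_, by exact_mod_cast hk⟩
end

section
/- In the Max-Cut reduction, the least upper bound over all repairs J of Q(J) equals the maximum cut size of G. Formally, max over repairs J of I of Q(J) = max over subsets S ⊆ V of |E(S, V\S)|. -/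
open Finset

lemma Qagg_le_cutSize {V : Type*} [Fintype V] [DecidableEq V]
    (G : SimpleGraph V) [DecidableRel G.Adj] (c1 c2 : V → Bool) :
    Qagg G c1 c2 ≤ (cutSize G (univ.filter (fun v => c1 v = true)) : ℤ) := by
  classical
  set S : Finset V := univ.filter (fun v => c1 v = true) with hS
  set A : Finset (V × V) :=
    univ.filter (fun p : V × V => G.Adj p.1 p.2 ∧ c1 p.1 = true ∧ c2 p.2 = false) with hA
  set D : Finset V := univ.filter (fun v => c1 v = true ∧ c2 v = false) with hD
  have h1 : (∑ p : V × V,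
      if G.Adj p.1 p.2 ∧ c1 p.1 = true ∧ c2 p.2 = false then (1 : ℤ) else 0)
      = (A.card : ℤ) := by
    rw [Finset.sum_boole]
  have h2 : (∑ v : V,
      if c1 v = true ∧ c2 v = false then (-(G.edgeFinset.card : ℤ) - 1) else 0)
      = (D.card : ℤ) * (-(G.edgeFinset.card : ℤ) - 1) := by
    rw [← Finset.sum_filter, Finset.sum_const, nsmul_eq_mul]
  -- split A
  have hsplit : (A.filter (fun p => c1 p.2 = false)).card
      + (A.filter (fun p => ¬ (c1 p.2 = false))).card = A.card :=
    Finset.card_filter_add_card_filter_not _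
  have hb1 : (A.filter (fun p => c1 p.2 = false)).card ≤ cutSize G S := by
    apply Finset.card_le_card
    intro p hp
    simp only [hA, Finset.mem_filter, Finset.mem_univ, true_and] at hp
    simp only [cutSize, hS, Finset.mem_filter, Finset.mem_univ, true_and]
    refine ⟨hp.1.1, hp.1.2.1, ?_⟩
    simp [hp.2]
  have hb2 : (A.filter (fun p => ¬ (c1 p.2 = false))).card ≤ D.card * G.edgeFinset.card := by
    rw [← Finset.card_product]
    apply Finset.card_le_card_of_injOn (fun p => (p.2, s(p.1, p.2)))
    · intro p hp
      have hp : p ∈ A.filter (fun p => ¬ (c1 p.2 = false)) := hp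
      simp only [hA, Finset.mem_filter, Finset.mem_univ, true_and] at hp
      obtain ⟨⟨hadj, hc1, hc2⟩, hc12⟩ := hp
      simp only [Finset.mem_coe, Finset.mem_product, hD, Finset.mem_filter, Finset.mem_univ, true_and]
      refine ⟨⟨?_, hc2⟩, ?_⟩
      · simpa using hc12
      · rw [SimpleGraph.mem_edgeFinset, SimpleGraph.mem_edgeSet]; exact hadj
    · intro p hp q hq heq
      simp only [Finset.coe_filter, Set.mem_setOf_eq, hA, Finset.mem_filter] at hp hq
      have h2 : p.2 = q.2 := congrArg Prod.fst heq
      have h1 : s(p.1, p.2) = s(q.1, q.2) := congrArg Prod.snd heq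
      rw [h2] at h1
      rw [Sym2.congr_left] at h1
      exact Prod.ext h1 h2
  -- conclude
  have hA_le : (A.card : ℤ) ≤ (cutSize G S : ℤ) + (D.card : ℤ) * (G.edgeFinset.card : ℤ) := by
    have := hsplit
    have h3 : A.card ≤ cutSize G S + D.card * G.edgeFinset.card := by omega
    exact_mod_cast h3
  have : Qagg G c1 c2 = (A.card : ℤ) + (D.card : ℤ) * (-(G.edgeFinset.card : ℤ) - 1) := by
    rw [Qagg, h1, h2]
  rw [this]
  have hk : (0 : ℤ) ≤ (D.card : ℤ) := Int.natCast_nonneg _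
  nlinarith [hA_le, hk]

lemma cutSize_eq_Qagg {V : Type*} [Fintype V] [DecidableEq V]
    (G : SimpleGraph V) [DecidableRel G.Adj] (S : Finset V) :
    (cutSize G S : ℤ) = Qagg G (fun v => decide (v ∈ S)) (fun v => decide (v ∈ S)) := by
  classical
  rw [Qagg]
  have h2 : (∑ v : V,
      if decide (v ∈ S) = true ∧ decide (v ∈ S) = false
      then (-(G.edgeFinset.card : ℤ) - 1) else 0) = 0 := by
    apply Finset.sum_eq_zero
    intro v _
    rw [if_neg]
    rintro ⟨ht, hf⟩
    rw [ht] at hf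
    simp at hf
  rw [h2, add_zero, Finset.sum_boole, cutSize]
  congr 2
  ext p
  simp [decide_eq_true_eq]

/-- In the Max-Cut reduction, the maximum of `Q(J)` over all repairs `J` of the
constructed instance equals the maximum cut size of `G`. -/
theorem stmt8 {V : Type*} [Fintype V] [DecidableEq V]
    (G : SimpleGraph V) [DecidableRel G.Adj] :
    (Finset.univ.sup' Finset.univ_nonempty
        (fun p : (V → Bool) × (V → Bool) => Qagg G p.1 p.2)) =
    (Finset.univ.sup' Finset.univ_nonempty
        (fun S : Finset V => (cutSize G S : ℤ))) := by
  apply le_antisymm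
  · apply Finset.sup'_le
    rintro ⟨c1, c2⟩ -
    exact le_trans (Qagg_le_cutSize G c1 c2)
      (Finset.le_sup' (fun S : Finset V => (cutSize G S : ℤ)) (Finset.mem_univ _))
  · apply Finset.sup'_le
    intro S _
    rw [cutSize_eq_Qagg G S]
    exact Finset.le_sup' (fun p : (V → Bool) × (V → Bool) => Qagg G p.1 p.2)
      (Finset.mem_univ ((fun v => decide (v ∈ S)), (fun v => decide (v ∈ S))))
end

section
/- Let q(A) := ∃x∃y (R1(x,'red') ∧ R2(y,'blue') ∧ R3(x,'red',y,'blue',A)) over relations R1 with key A1, R2 with key A2, and R3 with all-attribute key. Let q'(A) be the first-order query obtained from q by additionally requiring ∀z (R1(x,z) → z = 'red') and ∀w (R2(y,w) → w = 'blue'). Then for every instance I and every value a: a ∈ q'(I) if and only if a ∈ q(J) for every repair J of I. (That is, q' computes exactly the consistent answers of q.) -/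
/-- The consistent-answer rewriting `q'` computes exactly the consistent answers of
`q(A) = ∃x∃y (R1(x,'red') ∧ R2(y,'blue') ∧ R3(x,'red',y,'blue',A))`, over the schema
`R1(key A1, B1)`, `R2(key A2, B2)`, `R3` with all-attribute key: a value `a` satisfies
`q'` on `I` iff `a ∈ q(J)` for every repair `J` of `I` (a repair keeps exactly one fact
from each key-equal group of `R1` and of `R2`, and all facts of `R3`). -/
theorem stmt9 {D C : Type*} (red blue : D) (hrb : red ≠ blue)
    (R1 R2 : Finset (D × D)) (R3 : Finset (D × D × D × D × C)) :
    ∀ a : C,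
      (∃ x y : D, (x, red) ∈ R1 ∧ (y, blue) ∈ R2 ∧ (x, red, y, blue, a) ∈ R3 ∧
          (∀ z : D, (x, z) ∈ R1 → z = red) ∧ (∀ w : D, (y, w) ∈ R2 → w = blue))
      ↔
      (∀ J1 J2 : Finset (D × D),
          J1 ⊆ R1 → J2 ⊆ R2 →
          (∀ x : D, (∃ b, (x, b) ∈ R1) → ∃! b, (x, b) ∈ J1) →
          (∀ y : D, (∃ b, (y, b) ∈ R2) → ∃! b, (y, b) ∈ J2) →
          ∃ x y : D, (x, red) ∈ J1 ∧ (y, blue) ∈ J2 ∧ (x, red, y, blue, a) ∈ R3) := by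
  classical
  intro a
  constructor
  · rintro ⟨x, y, hx1, hy2, h3, hxr, hyb⟩ J1 J2 hJ1 hJ2 hk1 hk2
    obtain ⟨b1, hb1, _⟩ := hk1 x ⟨red, hx1⟩
    obtain ⟨b2, hb2, _⟩ := hk2 y ⟨blue, hy2⟩
    have e1 : b1 = red := hxr b1 (hJ1 hb1)
    have e2 : b2 = blue := hyb b2 (hJ2 hb2)
    exact ⟨x, y, e1 ▸ hb1, e2 ▸ hb2, h3⟩
  · intro H
    -- build adversarial repairs
    set f1 : D → D := fun x => if h : ∃ b, b ≠ red ∧ (x, b) ∈ R1 then h.choose else red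
      with hf1
    set f2 : D → D := fun y => if h : ∃ b, b ≠ blue ∧ (y, b) ∈ R2 then h.choose else blue
      with hf2
    set J1 : Finset (D × D) := R1.filter (fun p => p.2 = f1 p.1) with hJ1def
    set J2 : Finset (D × D) := R2.filter (fun p => p.2 = f2 p.1) with hJ2def
    have hJ1 : J1 ⊆ R1 := Finset.filter_subset _ _
    have hJ2 : J2 ⊆ R2 := Finset.filter_subset _ _
    have hk1 : ∀ x : D, (∃ b, (x, b) ∈ R1) → ∃! b, (x, b) ∈ J1 := by
      intro x ⟨b, hb⟩
      refine ⟨f1 x, Finset.mem_filter.mpr ⟨?_, rfl⟩, ?_⟩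
      · by_cases h : ∃ c, c ≠ red ∧ (x, c) ∈ R1
        · have := h.choose_spec.2
          simpa [hf1, dif_pos h] using this
        · have hbred : b = red := by
            by_contra hc
            exact h ⟨b, hc, hb⟩
          simp only [hf1, dif_neg h]
          exact hbred ▸ hb
      · intro c hc
        simp only [hJ1def, Finset.mem_filter] at hc
        exact hc.2
    have hk2 : ∀ y : D, (∃ b, (y, b) ∈ R2) → ∃! b, (y, b) ∈ J2 := by
      intro y ⟨b, hb⟩
      refine ⟨f2 y, Finset.mem_filter.mpr ⟨?_, rfl⟩, ?_⟩
      · by_cases h : ∃ c, c ≠ blue ∧ (y, c) ∈ R2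
        · have := h.choose_spec.2
          simpa [hf2, dif_pos h] using this
        · have hbblue : b = blue := by
            by_contra hc
            exact h ⟨b, hc, hb⟩
          simp only [hf2, dif_neg h]
          exact hbblue ▸ hb
      · intro c hc
        simp only [hJ2def, Finset.mem_filter] at hc
        exact hc.2
    obtain ⟨x, y, hx1, hy2, h3⟩ := H J1 J2 hJ1 hJ2 hk1 hk2
    simp only [hJ1def, Finset.mem_filter] at hx1
    simp only [hJ2def, Finset.mem_filter] at hy2
    -- from (x, red) ∈ J1 deduce x has only red facts
    have honly1 : ∀ z : D, (x, z) ∈ R1 → z = red := by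
      intro z hz
      by_contra hzne
      have h : ∃ c, c ≠ red ∧ (x, c) ∈ R1 := ⟨z, hzne, hz⟩
      have : red = f1 x := hx1.2
      rw [hf1] at this
      simp only [dif_pos h] at this
      exact h.choose_spec.1 this.symm
    have honly2 : ∀ w : D, (y, w) ∈ R2 → w = blue := by
      intro w hw
      by_contra hwne
      have h : ∃ c, c ≠ blue ∧ (y, c) ∈ R2 := ⟨w, hwne, hw⟩
      have : blue = f2 y := hy2.2
      rw [hf2] at this
      simp only [dif_pos h] at this
      exact h.choose_spec.1 this.symm
    exact ⟨x, y, hx1.1, hy2.1, h3, honly1, honly2⟩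
end

section
/- Let q be a conjunctive query (or a union of conjunctive queries) returning numeric values, I an instance over a schema with one key constraint per relation, and Q the aggregation query MIN over q. Let W_glb be a witness to q on I such that no two facts in W_glb are key-equal, and such that q(W_glb) is minimal among all witnesses with this property. Then q(W_glb) is the greatest lower bound of { Q(J) : J a repair of I, q(J) ≠ ∅ }. In particular: (a) there exists a repair J of I with W_glb ⊆ J, hence q(W_glb) ∈ q(J); and (b) no repair J contains a witness W with q(W) < q(W_glb). -/
/-- `J` contains exactly one fact from each key-equal group (fibers of `g`), i.e. `J` is
a repair under one key constraint per relation. -/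
def IsTransversal {F γ : Type*} (g : F → γ) (J : Finset F) : Prop :=
  ∀ j : γ, ∃! f, f ∈ J ∧ g f = j

/-- No two facts of the witness `W` are key-equal. -/
def NoKeyEqualPair {F γ : Type*} (g : F → γ) (W : Finset F) : Prop :=
  ∀ a ∈ W, ∀ b ∈ W, a ≠ b → g a ≠ g b

/-- Let `W_glb` (indexed by `i0`) be a witness of `q` on `I` with no two key-equal facts
whose value is minimal among all such witnesses.  Then (a) some repair contains `W_glb`;
(b) no repair contains a witness of smaller value; and `q(W_glb)` is the greatest lower
bound of `{ Q(J) : J a repair with q(J) ≠ ∅ }`, where `Q(J) = min { v(W) : W ⊆ J }`. -/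
theorem stmt10 {F γ ι : Type*} [Fintype F] [DecidableEq F] [Fintype ι]
    (g : F → γ) (hg : ∀ j : γ, ∃ f, g f = j)
    (w : ι → Finset F) (v : ι → ℝ) (i0 : ι)
    (h0 : NoKeyEqualPair g (w i0))
    (hmin : ∀ i : ι, NoKeyEqualPair g (w i) → v i0 ≤ v i) :
    (∃ J : Finset F, IsTransversal g J ∧ w i0 ⊆ J) ∧
    (∀ J : Finset F, IsTransversal g J → ∀ i : ι, w i ⊆ J → v i0 ≤ v i) ∧
    IsGLB {x : ℝ | ∃ J : Finset F, IsTransversal g J ∧ (∃ i, w i ⊆ J) ∧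
        x = sInf {y : ℝ | ∃ i, w i ⊆ J ∧ v i = y}} (v i0) := by
  classical
  -- choice function on fibers
  set c : γ → F := fun j => if h : ∃ a ∈ w i0, g a = j then h.choose else (hg j).choose
    with hc
  have hgc : ∀ j, g (c j) = j := by
    intro j
    by_cases h : ∃ a ∈ w i0, g a = j
    · simp only [hc, dif_pos h]
      exact h.choose_spec.2
    · simp only [hc, dif_neg h]
      exact (hg j).choose_spec
  set J : Finset F := Finset.image (fun f => c (g f)) Finset.univ with hJ
  have hJtrans : IsTransversal g J := by
    intro j
    obtain ⟨f, hf⟩ := hg j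
    refine ⟨c j, ⟨?_, hgc j⟩, ?_⟩
    · rw [hJ]
      exact Finset.mem_image.mpr ⟨f, Finset.mem_univ f, by rw [hf]⟩
    · rintro y ⟨hy, hgy⟩
      rw [hJ] at hy
      obtain ⟨f', -, rfl⟩ := Finset.mem_image.mp hy
      rw [hgc (g f')] at hgy
      rw [hgy]
  have hsub : w i0 ⊆ J := by
    intro a ha
    have h : ∃ a' ∈ w i0, g a' = g a := ⟨a, ha, rfl⟩
    have hca : c (g a) = a := by
      simp only [hc, dif_pos h]
      obtain ⟨h1, h2⟩ := h.choose_spec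
      by_contra hne
      exact h0 _ h1 _ ha hne h2
    rw [hJ]
    exact Finset.mem_image.mpr ⟨a, Finset.mem_univ a, hca⟩
  have hb : ∀ J : Finset F, IsTransversal g J → ∀ i : ι, w i ⊆ J → v i0 ≤ v i := by
    intro J hT i hwi
    refine hmin i ?_
    intro a ha b hb hab hg'
    obtain ⟨f, -, huniq⟩ := hT (g a)
    exact hab ((huniq a ⟨hwi ha, rfl⟩).trans (huniq b ⟨hwi hb, hg'.symm⟩).symm)
  refine ⟨⟨J, hJtrans, hsub⟩, hb, ?_, ?_⟩
  · -- lower bound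
    rintro x ⟨J', hT, ⟨i, hi⟩, rfl⟩
    refine le_csInf ⟨v i, i, hi, rfl⟩ ?_
    rintro y ⟨i', hi', rfl⟩
    exact hb J' hT i' hi'
  · -- greatest
    intro x hx
    have hmem : v i0 ∈ {x : ℝ | ∃ J : Finset F, IsTransversal g J ∧ (∃ i, w i ⊆ J) ∧
        x = sInf {y : ℝ | ∃ i, w i ⊆ J ∧ v i = y}} := by
      refine ⟨J, hJtrans, ⟨i0, hsub⟩, le_antisymm ?_ ?_⟩
      · refine le_csInf ⟨v i0, i0, hsub, rfl⟩ ?_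
        rintro y ⟨i', hi', rfl⟩
        exact hb J hJtrans i' hi'
      · refine csInf_le ⟨v i0, ?_⟩ ⟨i0, hsub, rfl⟩
        rintro y ⟨i', hi', rfl⟩
        exact hb J hJtrans i' hi'
    exact hx hmem
end

section
/- Let I be a finite set partitioned into nonempty key-equal groups G1,...,Gm, and let W1,...,Wn be witnesses (subsets of I) sorted so that their values satisfy v(W1) ≤ v(W2) ≤ ... ≤ v(Wn). For each j, let φ_j be the CNF formula consisting of the clauses (∨_{f∈G_i} x_f) for all groups G_i, together with the clauses (∨_{f∈W_t} ¬x_f) for all t ≤ j. Assume that every repair of I contains at least one witness (so min over witnesses contained in a repair is always defined). Then φ_n is unsatisfiable, and if j* is the least index such that φ_{j*} is unsatisfiable, then v(W_{j*}) equals the least upper bound over all repairs J of min{ v(W_t) : W_t ⊆ J }. -/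
/-- Iterative-SAT correctness for the lub-answer of MIN.  Groups are the fibers of `g`
(all nonempty); here a 'repair' is a subset containing at least one element of each
group.  The formula `φ_j` consists of the group clauses `(∨_{f ∈ G_i} x_f)` together
with the witness clauses `(∨_{f ∈ W_t} ¬x_f)` for all `t ≤ j`; witnesses are sorted so
that their values are ascending.  Assuming every repair contains at least one witness:
`φ_n` (with clauses for all witnesses) is unsatisfiable, and if `j*` is the least index
with `φ_{j*}` unsatisfiable, then `v(W_{j*})` is the least upper bound, over all repairs
`J`, of `min { v(W_t) : W_t ⊆ J }`. -/
theorem stmt11 {F γ : Type*} [Fintype F] [DecidableEq F]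
    (g : F → γ) (hg : ∀ j : γ, ∃ f, g f = j)
    (n : ℕ) (w : Fin n → Finset F) (v : Fin n → ℝ)
    (hsorted : ∀ i j : Fin n, i ≤ j → v i ≤ v j)
    (hwit : ∀ J : Finset F, (∀ c : γ, ∃ f ∈ J, g f = c) → ∃ t : Fin n, w t ⊆ J) :
    (¬ ∃ s : F → Bool,
        (∀ c : γ, ∃ f, g f = c ∧ s f = true) ∧
        (∀ t : Fin n, ∃ f ∈ w t, s f = false)) ∧
    (∀ jstar : Fin n,
      (¬ ∃ s : F → Bool,
          (∀ c : γ, ∃ f, g f = c ∧ s f = true) ∧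
          (∀ t : Fin n, t ≤ jstar → ∃ f ∈ w t, s f = false)) →
      (∀ i : Fin n, i < jstar →
        ∃ s : F → Bool,
          (∀ c : γ, ∃ f, g f = c ∧ s f = true) ∧
          (∀ t : Fin n, t ≤ i → ∃ f ∈ w t, s f = false)) →
      IsLUB {x : ℝ | ∃ J : Finset F, (∀ c : γ, ∃ f ∈ J, g f = c) ∧
          x = sInf {y : ℝ | ∃ t : Fin n, w t ⊆ J ∧ v t = y}} (v jstar)) := by
  classical
  -- repair extracted from an assignment
  have mkJ : ∀ s : F → Bool, (∀ c : γ, ∃ f, g f = c ∧ s f = true) →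
      ∀ c : γ, ∃ f ∈ Finset.univ.filter (fun f => s f = true), g f = c := by
    intro s hs c
    obtain ⟨f, hf, hft⟩ := hs c
    exact ⟨f, by simp [hft], hf⟩
  constructor
  · rintro ⟨s, hgrp, hw⟩
    obtain ⟨t, ht⟩ := hwit _ (mkJ s hgrp)
    obtain ⟨f, hfw, hfs⟩ := hw t
    have := ht hfw
    simp at this
    simp [this] at hfs
  · intro jstar hunsat hsat
    set S : Set ℝ := {x : ℝ | ∃ J : Finset F, (∀ c : γ, ∃ f ∈ J, g f = c) ∧
        x = sInf {y : ℝ | ∃ t : Fin n, w t ⊆ J ∧ v t = y}} with hS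
    have hfin : ∀ J : Finset F,
        Set.Finite {y : ℝ | ∃ t : Fin n, w t ⊆ J ∧ v t = y} := by
      intro J
      apply (Set.finite_range v).subset
      rintro y ⟨t, -, rfl⟩
      exact ⟨t, rfl⟩
    -- every repair contains a witness with index ≤ jstar
    have keyA : ∀ J : Finset F, (∀ c : γ, ∃ f ∈ J, g f = c) →
        ∃ t : Fin n, t ≤ jstar ∧ w t ⊆ J := by
      intro J hrep
      by_contra hcon
      push_neg at hcon
      apply hunsat
      refine ⟨fun f => decide (f ∈ J), ?_, ?_⟩
      · intro c
        obtain ⟨f, hf, hgf⟩ := hrep c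
        exact ⟨f, hgf, by simp [hf]⟩
      · intro t ht
        obtain ⟨f, hfw, hfJ⟩ := Finset.not_subset.mp (hcon t ht)
        exact ⟨f, hfw, by simp [hfJ]⟩
    -- every element of S is ≤ v jstar
    have hub : ∀ x ∈ S, x ≤ v jstar := by
      rintro x ⟨J, hrep, rfl⟩
      obtain ⟨t, htle, htsub⟩ := keyA J hrep
      calc sInf {y : ℝ | ∃ t : Fin n, w t ⊆ J ∧ v t = y} ≤ v t := by
            exact csInf_le ((hfin J).bddBelow) ⟨t, htsub, rfl⟩
        _ ≤ v jstar := hsorted _ _ htle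
    -- a repair avoiding all witnesses of index < jstar
    obtain ⟨s, hsgrp, hsw⟩ :
        ∃ s : F → Bool, (∀ c : γ, ∃ f, g f = c ∧ s f = true) ∧
          (∀ t : Fin n, t < jstar → ∃ f ∈ w t, s f = false) := by
      rcases Nat.eq_zero_or_pos jstar.val with h0 | hpos
      · exact ⟨fun _ => true, fun c => ⟨(hg c).choose, (hg c).choose_spec, rfl⟩,
          fun t ht => absurd (Fin.lt_iff_val_lt_val.mp ht) (by omega)⟩
      · obtain ⟨s, h1, h2⟩ := hsat ⟨jstar.val - 1, by omega⟩
          (Fin.lt_iff_val_lt_val.mpr (by simp; omega))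
        exact ⟨s, h1, fun t ht => h2 t (by
          have := Fin.lt_iff_val_lt_val.mp ht
          exact Fin.le_iff_val_le_val.mpr (by simp; omega))⟩
    set J : Finset F := Finset.univ.filter (fun f => s f = true) with hJ
    have hrep : ∀ c : γ, ∃ f ∈ J, g f = c := mkJ s hsgrp
    have hTne : Set.Nonempty {y : ℝ | ∃ t : Fin n, w t ⊆ J ∧ v t = y} := by
      obtain ⟨t, ht⟩ := hwit J hrep
      exact ⟨v t, t, ht, rfl⟩
    have hmem0 : sInf {y : ℝ | ∃ t : Fin n, w t ⊆ J ∧ v t = y} ∈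
        {y : ℝ | ∃ t : Fin n, w t ⊆ J ∧ v t = y} := hTne.csInf_mem (hfin J)
    obtain ⟨t0, ht0sub, ht0eq⟩ := hmem0
    -- t0 ≥ jstar since all earlier witnesses are violated
    have hge : jstar ≤ t0 := by
      by_contra hlt
      push_neg at hlt
      obtain ⟨f, hfw, hfs⟩ := hsw t0 hlt
      have := ht0sub hfw
      simp [hJ] at this
      simp [this] at hfs
    have hinS : sInf {y : ℝ | ∃ t : Fin n, w t ⊆ J ∧ v t = y} ∈ S := ⟨J, hrep, rfl⟩
    have heq : sInf {y : ℝ | ∃ t : Fin n, w t ⊆ J ∧ v t = y} = v jstar :=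
      le_antisymm (hub _ hinS) (ht0eq ▸ hsorted _ _ hge)
    exact ⟨fun x hx => hub x hx, fun b hb => heq ▸ hb hinS⟩
end

section
/- Let Σ be a set of denial constraints over schema R and I a finite R-instance. Let V be the set of minimal violations of Σ in I, and for each fact f let N^f be the set of near-violations with respect to f. Define the Boolean formula φ over variables x_f (f ∈ I) and p^f_N (f ∈ I, N ∈ N^f) as the conjunction of: (i) for each V ∈ V, the clause (∨_{f ∈ V} ¬x_f); (ii) for each f ∈ I, the clause (x_f ∨ ∨_{N ∈ N^f} p^f_N); (iii) for each f and N ∈ N^f, the equivalence p^f_N ↔ (∧_{g ∈ N} x_g). Then the satisfying assignments of φ are in one-to-one correspondence with the subset repairs of I with respect to Σ, via J = { f : x_f = true }. -/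
/-- `J` is consistent: it contains no minimal violation from `𝒱`. -/
def ConsistentWrt {F : Type*} [DecidableEq F] (𝒱 : Finset (Finset F)) (J : Finset F) : Prop :=
  ∀ Vl ∈ 𝒱, ¬ Vl ⊆ J

/-- `J` is a subset repair: a maximal consistent subinstance. -/
def RepairWrt {F : Type*} [DecidableEq F] (𝒱 : Finset (Finset F)) (J : Finset F) : Prop :=
  ConsistentWrt 𝒱 J ∧ ∀ f : F, f ∉ J → ¬ ConsistentWrt 𝒱 (insert f J)

/-- `N` is a near-violation w.r.t. the fact `f`: `N` is consistent and `N ∪ {f}` is a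
minimal violation.  (If `{f}` itself is a minimal violation then `N = ∅` qualifies,
playing the role of the trivial `{f_true}` near-violation.) -/
def NearViol {F : Type*} [DecidableEq F] (𝒱 : Finset (Finset F)) (f : F) (N : Finset F) : Prop :=
  ConsistentWrt 𝒱 N ∧ insert f N ∈ 𝒱

/-- The satisfying assignments of the formula `φ` — consisting of (i) a clause
`(∨_{f ∈ V} ¬x_f)` for every minimal violation `V ∈ 𝒱`, (ii) a clause
`(x_f ∨ ∨_{N ∈ N^f} p^f_N)` for every fact `f`, and (iii) the equivalences
`p^f_N ↔ (∧_{g ∈ N} x_g)` — are in one-to-one correspondence with the subset repairs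
of `I` w.r.t. `Σ`, via `J = { f : x_f = true }`. -/
theorem stmt12 {F : Type*} [Fintype F] [DecidableEq F]
    (𝒱 : Finset (Finset F))
    (hmin : ∀ Vl ∈ 𝒱, ∀ Vl' ∈ 𝒱, Vl' ⊆ Vl → Vl' = Vl) :
    ∃ e : {sp : (F → Bool) × (∀ f : F, {N : Finset F // NearViol 𝒱 f N} → Bool) //
            (∀ Vl ∈ 𝒱, ∃ f ∈ Vl, sp.1 f = false) ∧
            (∀ f : F, sp.1 f = true ∨ ∃ N : {N : Finset F // NearViol 𝒱 f N}, sp.2 f N = true) ∧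
            (∀ (f : F) (N : {N : Finset F // NearViol 𝒱 f N}),
              sp.2 f N = true ↔ ∀ a ∈ (N : Finset F), sp.1 a = true)}
        ≃ {J : Finset F // RepairWrt 𝒱 J},
      ∀ sp, (e sp : Finset F) = Finset.univ.filter (fun f => sp.1.1 f = true) := by
  classical
  refine ⟨{
    toFun := fun sp => ⟨Finset.univ.filter (fun f => sp.1.1 f = true), ?_, ?_⟩
    invFun := fun J => ⟨(fun f => decide (f ∈ J.1), fun f N => decide ((N : Finset F) ⊆ J.1)),
      ?_, ?_, ?_⟩
    left_inv := ?_
    right_inv := ?_ }, fun sp => rfl⟩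
  · -- consistency
    intro Vl hVl hsub
    obtain ⟨f, hfV, hf⟩ := sp.2.1 Vl hVl
    have := hsub hfV
    simp only [Finset.mem_filter] at this
    simp [this.2] at hf
  · -- maximality
    intro f hf hcons
    have hxf : sp.1.1 f = false := by
      cases h : sp.1.1 f with
      | false => rfl
      | true => exact absurd (by simp [h]) hf
    rcases sp.2.2.1 f with h | ⟨N, hN⟩
    · simp [hxf] at h
    · have hsub : (N : Finset F) ⊆ Finset.univ.filter (fun f => sp.1.1 f = true) := by
        intro a ha
        simp [Finset.mem_filter, (sp.2.2.2 f N).mp hN a ha]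
      exact hcons _ N.2.2 (by
        intro a ha
        rcases Finset.mem_insert.mp ha with rfl | ha
        · exact Finset.mem_insert_self _ _
        · exact Finset.mem_insert_of_mem (hsub ha))
  · -- (i)
    intro Vl hVl
    obtain ⟨f, hfV, hfJ⟩ := Finset.not_subset.mp (J.2.1 Vl hVl)
    exact ⟨f, hfV, by simp [hfJ]⟩
  · -- (ii)
    intro f
    by_cases hf : f ∈ J.1
    · exact Or.inl (by simp [hf])
    · right
      have h := J.2.2 f hf
      simp only [ConsistentWrt, not_forall] at h
      obtain ⟨Vl, hVl, hsub⟩ := h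
      rw [not_not] at hsub
      have hfVl : f ∈ Vl := by
        by_contra hfVl
        exact J.2.1 Vl hVl (fun a ha => by
          rcases Finset.mem_insert.mp (hsub ha) with rfl | h
          · exact absurd ha hfVl
          · exact h)
      have hNsub : Vl.erase f ⊆ J.1 := by
        intro a ha
        rcases Finset.mem_insert.mp (hsub (Finset.mem_of_mem_erase ha)) with rfl | h
        · exact absurd rfl (Finset.ne_of_mem_erase ha)
        · exact h
      refine ⟨⟨Vl.erase f, ?_, by rw [Finset.insert_erase hfVl]; exact hVl⟩, by simpa using hNsub⟩
      intro Vl' hVl' hsub'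
      exact J.2.1 Vl' hVl' (hsub'.trans hNsub)
  · -- (iii)
    intro f N
    simp [Finset.subset_iff]
  · -- left_inv
    intro sp
    apply Subtype.ext
    apply Prod.ext
    · funext f
      simp
    · funext f N
      have h := sp.2.2.2 f N
      show decide ((N : Finset F) ⊆ Finset.univ.filter (fun g => sp.1.1 g = true)) = sp.1.2 f N
      by_cases hsub : (N : Finset F) ⊆ Finset.univ.filter (fun g => sp.1.1 g = true)
      · rw [decide_eq_true hsub, eq_comm, h]
        intro a ha
        exact (Finset.mem_filter.mp (hsub ha)).2
      · rw [decide_eq_false hsub, eq_comm, Bool.eq_false_iff, Ne, h]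
        intro hall
        exact hsub (fun a ha => Finset.mem_filter.mpr ⟨Finset.mem_univ a, hall a ha⟩)
  · -- right_inv
    intro J
    apply Subtype.ext
    simp [Finset.ext_iff]
end

section
/- Let I be partitioned into groups G1,...,Gm and let W be a family of witnesses with multiplicities m_W. Then the glb-answer and lub-answer to the scalar COUNT query (glb = min over repairs J of Σ_{W⊆J} m_W and lub = max over repairs J of Σ_{W⊆J} m_W) satisfy: glb + (maximum number of soft clauses weight satisfied subject to hard clauses) = Σ_W m_W, and lub + (minimum number of soft clauses weight satisfied subject to hard clauses) = Σ_W m_W, where the soft clauses are (∨_{f∈W} ¬x_f) with weight m_W and the hard clauses enforce exactly one variable per group. -/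
open Finset

/-- `Q(J) = Σ_{W ⊆ J} m_W` (the COUNT answer on repair `J`). -/
def Qval {F ι : Type*} [Fintype ι] [DecidableEq F]
    (w : ι → Finset F) (m : ι → ℕ) (J : Finset F) : ℕ :=
  ∑ W : ι, if w W ⊆ J then m W else 0

/-- Total weight of the soft clauses `(∨_{f ∈ W} ¬x_f)` (weight `m_W`) satisfied by `s`. -/
def softWeight {F ι : Type*} [Fintype ι]
    (w : ι → Finset F) (m : ι → ℕ) (s : F → Bool) : ℕ :=
  ∑ W : ι, if ∃ f ∈ w W, s f = false then m W else 0

lemma key_sum {F ι : Type*} [Fintype F] [DecidableEq F] [Fintype ι]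
    (w : ι → Finset F) (m : ι → ℕ) (s : F → Bool) :
    Qval w m (repOf s) + softWeight w m s = ∑ W : ι, m W := by
  unfold Qval softWeight
  rw [← Finset.sum_add_distrib]
  apply Finset.sum_congr rfl
  intro W _
  by_cases h : w W ⊆ repOf s
  · have : ¬ ∃ f ∈ w W, s f = false := by
      rintro ⟨f, hf, hsf⟩
      have := h hf
      simp [repOf] at this
      simp [this] at hsf
    simp [h, this]
  · have : ∃ f ∈ w W, s f = false := by
      rw [Finset.not_subset] at h
      obtain ⟨f, hf, hnf⟩ := h
      refine ⟨f, hf, ?_⟩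
      simp [repOf] at hnf
      simpa using hnf
    simp [h, this]

lemma sat_of_trans {F γ : Type*} [Fintype F] [DecidableEq F]
    (g : F → γ) (J : Finset F) (h : IsTransversal g J) :
    SatHard g (fun f => decide (f ∈ J)) ∧ repOf (fun f => decide (f ∈ J)) = J := by
  constructor
  · constructor
    · intro j
      obtain ⟨f, ⟨hfJ, hfg⟩, _⟩ := h j
      exact ⟨f, hfg, by simp [hfJ]⟩
    · intro u v huv hguv ⟨hu, hv⟩
      simp at hu hv
      obtain ⟨f, _, huniq⟩ := h (g u)
      exact huv ((huniq u ⟨hu, rfl⟩).trans (huniq v ⟨hv, hguv.symm⟩).symm)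
  · ext f; simp [repOf]

lemma trans_of_sat {F γ : Type*} [Fintype F] [DecidableEq F]
    (g : F → γ) (hg : ∀ j : γ, ∃ f, g f = j) (s : F → Bool) (h : SatHard g s) :
    IsTransversal g (repOf s) := by
  intro j
  obtain ⟨f, hfg, hfs⟩ := h.1 j
  refine ⟨f, ⟨by simp [repOf, hfs], hfg⟩, ?_⟩
  rintro u ⟨huJ, hug⟩
  simp [repOf] at huJ
  by_contra hne
  exact h.2 u f hne (hug.trans hfg.symm) ⟨huJ, hfs⟩

/-- For the scalar COUNT query: `glb + (max soft weight subject to hard clauses) = Σ_W m_W`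
and `lub + (min soft weight subject to hard clauses) = Σ_W m_W`, where
`glb`/`lub` are the minimum/maximum of `Q(J)` over all repairs `J`. -/
theorem stmt16 {F γ ι : Type*} [Fintype F] [DecidableEq F] [Fintype ι]
    (g : F → γ) (hg : ∀ j : γ, ∃ f, g f = j)
    (w : ι → Finset F) (m : ι → ℕ) (hm : ∀ W, 0 < m W) :
    ∀ glbval lubval maxwt minwt : ℕ,
      IsLeast {x : ℕ | ∃ J : Finset F, IsTransversal g J ∧ Qval w m J = x} glbval →
      IsGreatest {x : ℕ | ∃ J : Finset F, IsTransversal g J ∧ Qval w m J = x} lubval →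
      IsGreatest {x : ℕ | ∃ s : F → Bool, SatHard g s ∧ softWeight w m s = x} maxwt →
      IsLeast {x : ℕ | ∃ s : F → Bool, SatHard g s ∧ softWeight w m s = x} minwt →
      glbval + maxwt = (∑ W : ι, m W) ∧ lubval + minwt = (∑ W : ι, m W) := by
  intro glbval lubval maxwt minwt hglb hlub hmax hmin
  obtain ⟨⟨J1, hJ1, hQ1⟩, hglbLB⟩ := hglb
  obtain ⟨⟨J2, hJ2, hQ2⟩, hlubUB⟩ := hlub
  obtain ⟨⟨s1, hs1, hW1⟩, hmaxUB⟩ := hmax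
  obtain ⟨⟨s2, hs2, hW2⟩, hminLB⟩ := hmin
  have k1 := key_sum w m s1
  have k2 := key_sum w m s2
  obtain ⟨hsat1, hrep1⟩ := sat_of_trans g J1 hJ1
  obtain ⟨hsat2, hrep2⟩ := sat_of_trans g J2 hJ2
  have e1 := key_sum w m (fun f => decide (f ∈ J1))
  have e2 := key_sum w m (fun f => decide (f ∈ J2))
  rw [hrep1] at e1
  rw [hrep2] at e2
  have h1 : glbval ≤ Qval w m (repOf s1) :=
    hglbLB ⟨repOf s1, trans_of_sat g hg s1 hs1, rfl⟩
  have h2 : Qval w m (repOf s2) ≤ lubval :=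
    hlubUB ⟨repOf s2, trans_of_sat g hg s2 hs2, rfl⟩
  have h3 : softWeight w m (fun f => decide (f ∈ J1)) ≤ maxwt :=
    hmaxUB ⟨_, hsat1, rfl⟩
  have h4 : minwt ≤ softWeight w m (fun f => decide (f ∈ J2)) :=
    hminLB ⟨_, hsat2, rfl⟩
  omega
end

section
/- DISTINCT encoding correctness: Let I be partitioned into groups G1,...,Gm and let A be a finite set of answer values; for each b ∈ A let W^b be a family of witnesses (subsets of I). Consider the encoding that introduces variables z^b_j with hard clauses forcing z^b_j ↔ (∨_{f ∈ W^b_j} ¬x_f) and v^b with hard clauses forcing v^b ↔ (∧_j z^b_j). Then for any assignment s satisfying the group hard clauses and these definitional hard clauses, with repair J_s: v^b is false under s if and only if some witness in W^b is contained in J_s. Consequently, the number of b ∈ A with v^b false equals the number of distinct answers b realized in J_s, and minimizing/maximizing the number of satisfied clauses (v^b) over such assignments computes the lub/glb of COUNT(DISTINCT) over all repairs. -/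
open Finset

/-- The COUNT(DISTINCT) answer on repair `J`: the number of answers `b` realized in `J`,
i.e. such that some witness in `W^b` is contained in `J`. -/
def countDistinct {F A : Type*} [Fintype A] [DecidableEq F]
    (Wfam : A → Finset (Finset F)) (J : Finset F) : ℕ :=
  (Finset.univ.filter (fun b : A => ∃ Wj ∈ Wfam b, Wj ⊆ J)).card

lemma aux_false_iff {F A : Type*} [Fintype F] [DecidableEq F]
    (Wfam : A → Finset (Finset F))
    (s : F → Bool) (z : A → Finset F → Bool) (vb : A → Bool)
    (hz : ∀ b : A, ∀ Wj ∈ Wfam b, (z b Wj = true ↔ ∃ f ∈ Wj, s f = false))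
    (hv : ∀ b : A, (vb b = true ↔ ∀ Wj ∈ Wfam b, z b Wj = true)) :
    ∀ b : A, vb b = false ↔ ∃ Wj ∈ Wfam b, Wj ⊆ repOf s := by
  intro b
  rw [← Bool.not_eq_true, hv b]
  push_neg
  constructor
  · rintro ⟨Wj, hW, hzf⟩
    refine ⟨Wj, hW, fun f hf => ?_⟩
    have h1 : ¬ ∃ f ∈ Wj, s f = false := fun h => hzf ((hz b Wj hW).mpr h)
    push_neg at h1
    have h2 := h1 f hf
    simp only [repOf, mem_filter, mem_univ, true_and]
    revert h2
    cases s f <;> simp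
  · rintro ⟨Wj, hW, hsub⟩
    refine ⟨Wj, hW, fun hzt => ?_⟩
    obtain ⟨f, hf, hsf⟩ := (hz b Wj hW).mp hzt
    have : s f = true := by simpa [repOf] using hsub hf
    simp [this] at hsf

lemma aux_count {F A : Type*} [Fintype F] [DecidableEq F] [Fintype A] [DecidableEq A]
    (Wfam : A → Finset (Finset F))
    (s : F → Bool) (z : A → Finset F → Bool) (vb : A → Bool)
    (hz : ∀ b : A, ∀ Wj ∈ Wfam b, (z b Wj = true ↔ ∃ f ∈ Wj, s f = false))
    (hv : ∀ b : A, (vb b = true ↔ ∀ Wj ∈ Wfam b, z b Wj = true)) :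
    (Finset.univ.filter (fun b : A => vb b = true)).card + countDistinct Wfam (repOf s)
      = Fintype.card A := by
  have hfalse := aux_false_iff Wfam s z vb hz hv
  have h1 : countDistinct Wfam (repOf s) = (Finset.univ.filter (fun b : A => vb b = false)).card := by
    unfold countDistinct
    congr 1
    ext b
    simp [hfalse b]
  rw [h1]
  have h2 : (Finset.univ.filter (fun b : A => ¬ vb b = true))
      = (Finset.univ.filter (fun b : A => vb b = false)) := by
    ext b; simp
  rw [← h2, Finset.card_filter_add_card_filter_not, Finset.card_univ]

lemma aux_trans {F γ : Type*} [Fintype F] [DecidableEq F] (g : F → γ) (s : F → Bool)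
    (hs : SatHard g s) : IsTransversal g (repOf s) := by
  intro j
  obtain ⟨f, hgf, hsf⟩ := hs.1 j
  refine ⟨f, ⟨by simp [repOf, hsf], hgf⟩, ?_⟩
  rintro f' ⟨hf', hgf'⟩
  by_contra hne
  exact hs.2 f' f hne (hgf'.trans hgf.symm) ⟨by simpa [repOf] using hf', hsf⟩

lemma aux_sat {F γ : Type*} [Fintype F] [DecidableEq F] (g : F → γ) (J : Finset F)
    (hJ : IsTransversal g J) : SatHard g (fun f => decide (f ∈ J)) := by
  constructor
  · intro j
    obtain ⟨f, ⟨hfJ, hgf⟩, _⟩ := hJ j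
    exact ⟨f, hgf, by simp [hfJ]⟩
  · intro u v huv hg ⟨hu, hv⟩
    simp only [decide_eq_true_eq] at hu hv
    obtain ⟨f, _, huniq⟩ := hJ (g u)
    exact huv ((huniq u ⟨hu, rfl⟩).trans (huniq v ⟨hv, hg.symm⟩).symm)

lemma aux_rep {F : Type*} [Fintype F] [DecidableEq F] (J : Finset F) :
    repOf (fun f => decide (f ∈ J)) = J := by
  ext f; simp [repOf]

/-- Correctness of the DISTINCT encoding: for any assignment `(s, z, vb)` satisfying the
group hard clauses and the definitional hard clauses `z^b_j ↔ (∨_{f ∈ W^b_j} ¬x_f)` and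
`v^b ↔ (∧_j z^b_j)`, with `J_s` the corresponding repair: `v^b` is false iff some witness
of `W^b` is contained in `J_s`; hence the number of `b` with `v^b` false equals the number
of distinct answers realized in `J_s`; and minimizing (resp. maximizing) the number of
satisfied clauses `(v^b)` computes the lub (resp. glb) of COUNT(DISTINCT) over repairs. -/
theorem stmt17 {F γ A : Type*} [Fintype F] [DecidableEq F] [Fintype A] [DecidableEq A]
    (g : F → γ) (hg : ∀ j : γ, ∃ f, g f = j)
    (Wfam : A → Finset (Finset F)) (hWne : ∀ b : A, (Wfam b).Nonempty) :
    ∀ (s : F → Bool) (z : A → Finset F → Bool) (vb : A → Bool),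
      SatHard g s →
      (∀ b : A, ∀ Wj ∈ Wfam b, (z b Wj = true ↔ ∃ f ∈ Wj, s f = false)) →
      (∀ b : A, (vb b = true ↔ ∀ Wj ∈ Wfam b, z b Wj = true)) →
      ((∀ b : A, vb b = false ↔ ∃ Wj ∈ Wfam b, Wj ⊆ repOf s) ∧
       (Finset.univ.filter (fun b : A => vb b = false)).card = countDistinct Wfam (repOf s) ∧
       ((∀ (s' : F → Bool) (z' : A → Finset F → Bool) (vb' : A → Bool),
            SatHard g s' →
            (∀ b : A, ∀ Wj ∈ Wfam b, (z' b Wj = true ↔ ∃ f ∈ Wj, s' f = false)) →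
            (∀ b : A, (vb' b = true ↔ ∀ Wj ∈ Wfam b, z' b Wj = true)) →
            (Finset.univ.filter (fun b : A => vb b = true)).card ≤
              (Finset.univ.filter (fun b : A => vb' b = true)).card) →
          IsGreatest {x : ℕ | ∃ J : Finset F, IsTransversal g J ∧ countDistinct Wfam J = x}
            (countDistinct Wfam (repOf s))) ∧
       ((∀ (s' : F → Bool) (z' : A → Finset F → Bool) (vb' : A → Bool),
            SatHard g s' →
            (∀ b : A, ∀ Wj ∈ Wfam b, (z' b Wj = true ↔ ∃ f ∈ Wj, s' f = false)) →
            (∀ b : A, (vb' b = true ↔ ∀ Wj ∈ Wfam b, z' b Wj = true)) →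
            (Finset.univ.filter (fun b : A => vb' b = true)).card ≤
              (Finset.univ.filter (fun b : A => vb b = true)).card) →
          IsLeast {x : ℕ | ∃ J : Finset F, IsTransversal g J ∧ countDistinct Wfam J = x}
            (countDistinct Wfam (repOf s)))) := by
  intro s z vb hs hz hv
  have hfalse := aux_false_iff Wfam s z vb hz hv
  have hcount := aux_count Wfam s z vb hz hv
  refine ⟨hfalse, ?_, ?_, ?_⟩
  · unfold countDistinct
    congr 1
    ext b
    simp [hfalse b]
  · intro hmin
    constructor
    · exact ⟨repOf s, aux_trans g s hs, rfl⟩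
    · rintro x ⟨J, hJ, rfl⟩
      have hle := hmin (fun f => decide (f ∈ J))
        (fun _ Wj => decide (∃ f ∈ Wj, (decide (f ∈ J) : Bool) = false))
        (fun b => decide (∀ Wj ∈ Wfam b,
          (decide (∃ f ∈ Wj, (decide (f ∈ J) : Bool) = false) : Bool) = true))
        (aux_sat g J hJ) (by intro b Wj _; simp) (by intro b; simp)
      have hcount' := aux_count Wfam (fun f => decide (f ∈ J))
        (fun _ Wj => decide (∃ f ∈ Wj, (decide (f ∈ J) : Bool) = false))
        (fun b => decide (∀ Wj ∈ Wfam b,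
          (decide (∃ f ∈ Wj, (decide (f ∈ J) : Bool) = false) : Bool) = true))
        (by intro b Wj _; simp) (by intro b; simp)
      rw [aux_rep] at hcount'
      omega
  · intro hmax
    constructor
    · exact ⟨repOf s, aux_trans g s hs, rfl⟩
    · rintro x ⟨J, hJ, rfl⟩
      have hle := hmax (fun f => decide (f ∈ J))
        (fun _ Wj => decide (∃ f ∈ Wj, (decide (f ∈ J) : Bool) = false))
        (fun b => decide (∀ Wj ∈ Wfam b,
          (decide (∃ f ∈ Wj, (decide (f ∈ J) : Bool) = false) : Bool) = true))
        (aux_sat g J hJ) (by intro b Wj _; simp) (by intro b; simp)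
      have hcount' := aux_count Wfam (fun f => decide (f ∈ J))
        (fun _ Wj => decide (∃ f ∈ Wj, (decide (f ∈ J) : Bool) = false))
        (fun b => decide (∀ Wj ∈ Wfam b,
          (decide (∃ f ∈ Wj, (decide (f ∈ J) : Bool) = false) : Bool) = true))
        (by intro b Wj _; simp) (by intro b; simp)
      rw [aux_rep] at hcount'
      omega
end
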